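/- Let g be an upper unitriangular n×n matrix over a field K (i.e., g is upper triangular with all diagonal entries equal to 1), and let Y be any n×n matrix. If I ⊆ {1,…,n} is an integer interval ending at n (i.e., I = {k, k+1, …, n} for some k) and J ⊆ {1,…,n} is any subset with |I| = |J|, then the minor of g·Y with rows I and columns J equals the minor of Y with rows I and columns J. -/

import Mathlib

/-- minors of g·Y with row set a terminal integer interval ending at n
coincide with the corresponding minors of Y when g is upper unitriangular. -/
theorem stmt1 {K : Type*} [Field K] {n : ℕ} (m : ℕ) (hm : m ≤ n)
    (g Y : Matrix (Fin n) (Fin n) K)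
    (hdiag : ∀ i, g i i = 1)
    (hlow : ∀ i j : Fin n, j < i → g i j = 0)
    (c : Fin m → Fin n) (hc : Function.Injective c) :
    ((g * Y).submatrix
        (fun t : Fin m => (⟨n - m + t.val, by have := t.isLt; omega⟩ : Fin n)) c).det
      = (Y.submatrix
        (fun t : Fin m => (⟨n - m + t.val, by have := t.isLt; omega⟩ : Fin n)) c).det := by
  set r : Fin m → Fin n := fun t => (⟨n - m + t.val, by have := t.isLt; omega⟩ : Fin n)
    with hr
  have hrinj : Function.Injective r := by
    intro a b hab
    have : n - m + a.val = n - m + b.val := congrArg Fin.val hab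
    exact Fin.ext (by omega)
  have key : (g * Y).submatrix r c = (g.submatrix r r) * (Y.submatrix r c) := by
    ext t j
    simp only [Matrix.submatrix_apply, Matrix.mul_apply]
    have himg : ∑ s : Fin m, g (r t) (r s) * Y (r s) (c j)
        = ∑ k ∈ Finset.univ.image r, g (r t) k * Y k (c j) := by
      rw [Finset.sum_image (fun a _ b _ h => hrinj h)]
    rw [himg]
    symm
    apply Finset.sum_subset (Finset.subset_univ _)
    intro k _ hk
    have hkv : k.val < n - m := by
      by_contra h
      push_neg at h
      exact hk (Finset.mem_image.mpr ⟨⟨k.val - (n - m), by omega⟩, Finset.mem_univ _,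
        Fin.ext (by show n - m + (k.val - (n - m)) = k.val; omega)⟩)
    have : k < r t := by
      have : (r t).val = n - m + t.val := rfl
      exact Fin.lt_def.mpr (by omega)
    rw [hlow _ _ this, zero_mul]
  rw [key, Matrix.det_mul]
  have hdet : (g.submatrix r r).det = 1 := by
    rw [Matrix.det_of_upperTriangular]
    · simp [Matrix.submatrix_apply, hdiag]
    · intro i j hij
      have hij' : j.val < i.val := hij
      exact hlow _ _ (Fin.lt_def.mpr (by show n - m + j.val < n - m + i.val; omega))
  rw [hdet, one_mul]
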